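/- Let A be a unital C*-algebra, let N ∈ A be a normal element, let U ⊆ ℂ be an open set with U ∩ spectrum(N) ≠ ∅, and let (Nₙ) be a sequence of normal elements of A converging in norm to N. Then there exists k ∈ ℕ such that spectrum(Nₙ) ∩ U ≠ ∅ for all n ≥ k. -/

import Mathlib

set_option maxHeartbeats 2000000
open scoped NNReal ENNReal

lemma aux_normal_sub_scalar {A : Type*} [NormedRing A] [StarRing A]
    [NormedAlgebra ℂ A] [StarModule ℂ A] (a : A) (ha : IsStarNormal a) (r : ℂ) :
    IsStarNormal (algebraMap ℂ A r - a) := by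
  constructor
  have h := ha.star_comm_self
  have hs : star (algebraMap ℂ A r) = algebraMap ℂ A (starRingEnd ℂ r) := by
    simp [Algebra.algebraMap_eq_smul_one, star_smul]
  have hc1 : Commute (algebraMap ℂ A r) a := (Algebra.commutes r a)
  have hc2 : Commute (algebraMap ℂ A (starRingEnd ℂ r)) a := (Algebra.commutes _ a)
  have hc3 : Commute (algebraMap ℂ A r) (star a) := (Algebra.commutes r (star a))
  have hc4 : Commute (algebraMap ℂ A (starRingEnd ℂ r)) (star a) := (Algebra.commutes _ _)
  rw [star_sub, hs]
  have X : Commute (algebraMap ℂ A (starRingEnd ℂ r) - star a) (algebraMap ℂ A r) :=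
    Commute.sub_left (Algebra.commutes _ _) hc3.symm
  have Y : Commute (algebraMap ℂ A (starRingEnd ℂ r) - star a) a :=
    Commute.sub_left hc2 h
  exact X.sub_right Y

lemma aux_normal_inv {A : Type*} [Monoid A] [StarMul A]
    (u : Aˣ) (h : IsStarNormal (u : A)) : IsStarNormal ((↑u⁻¹ : A)) := by
  constructor
  have c1 : Commute ((↑u⁻¹ : A)) (star (u : A)) := h.star_comm_self.symm.units_inv_left
  have c2 : Commute (star (↑u⁻¹ : A)) (u : A) := by
    simpa [star_star] using c1.star_star
  exact c2.units_inv_right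

theorem stmt1 {A : Type*} [NormedRing A] [StarRing A] [CStarRing A] [CompleteSpace A]
    [NormedAlgebra ℂ A] [StarModule ℂ A]
    (N : A) (hN : IsStarNormal N) (U : Set ℂ) (hU : IsOpen U)
    (hne : (U ∩ spectrum ℂ N).Nonempty)
    (Ns : ℕ → A) (hNs : ∀ n, IsStarNormal (Ns n))
    (hconv : Filter.Tendsto Ns Filter.atTop (nhds N)) :
    ∃ k : ℕ, ∀ n ≥ k, (spectrum ℂ (Ns n) ∩ U).Nonempty := by
  letI : CStarAlgebra A := { }
  obtain ⟨lam, hlamU, hlam⟩ := hne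
  have hnt : Nontrivial A := by
    by_contra h
    rw [not_nontrivial_iff_subsingleton] at h
    exact spectrum.mem_iff.mp hlam (isUnit_of_subsingleton _)
  obtain ⟨ε, hε, hball⟩ := Metric.isOpen_iff.mp hU lam hlamU
  by_contra hcon
  push_neg at hcon
  -- get k such that ‖Ns n - N‖ < ε for n ≥ k
  have := Metric.tendsto_atTop.mp hconv ε hε
  obtain ⟨k, hk⟩ := this
  obtain ⟨n, hnk, hdis⟩ := hcon k
  have hnear : ‖Ns n - N‖ < ε := by
    simpa [dist_eq_norm] using hk n hnk
  -- lam is not in spectrum of Ns n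
  have hlamn : lam ∉ spectrum ℂ (Ns n) := fun h =>
    Set.eq_empty_iff_forall_notMem.mp hdis lam ⟨h, hlamU⟩
  obtain ⟨u, hu⟩ := spectrum.notMem_iff.mp hlamn
  -- every element of spectrum (Ns n) is at distance ≥ ε from lam
  have hdist : ∀ μ ∈ spectrum ℂ (Ns n), ε ≤ ‖lam - μ‖ := by
    intro μ hμ
    by_contra hlt
    push_neg at hlt
    have : μ ∈ Metric.ball lam ε := by
      rw [Metric.mem_ball, dist_comm, dist_eq_norm]; exact hlt
    exact Set.eq_empty_iff_forall_notMem.mp hdis μ ⟨hμ, hball this⟩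
  -- the inverse of u has norm ≤ ε⁻¹
  have hnormal_u : IsStarNormal (u : A) := by
    rw [hu]; exact aux_normal_sub_scalar (Ns n) (hNs n) lam
  have hnormal_uinv : IsStarNormal ((↑u⁻¹ : A)) := aux_normal_inv u hnormal_u
  have hspec_inv : ∀ ν ∈ spectrum ℂ ((↑u⁻¹ : A)), ‖ν‖ ≤ ε⁻¹ := by
    intro ν hν
    have hν0 : ν ≠ 0 := spectrum.ne_zero_of_mem_of_unit hν
    have h1 : (ν⁻¹)⁻¹ ∈ spectrum ℂ ((↑u⁻¹ : A)) := by rwa [inv_inv]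
    have h2 : ν⁻¹ ∈ spectrum ℂ (u : A) := spectrum.inv₀_mem_inv_iff.mp h1
    rw [hu, ← spectrum.singleton_sub_eq] at h2
    obtain ⟨r, hr, μ, hμ, hrμ⟩ := h2
    simp only [Set.mem_singleton_iff] at hr
    subst hr
    have hge : ε ≤ ‖ν⁻¹‖ := by rw [← hrμ]; exact hdist μ hμ
    rw [norm_inv] at hge
    calc ‖ν‖ = (‖ν‖⁻¹)⁻¹ := (inv_inv _).symm
      _ ≤ ε⁻¹ := by
          apply inv_anti₀ hε hge
  have hnorm_inv : ‖(↑u⁻¹ : A)‖ ≤ ε⁻¹ := by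
    haveI := hnormal_uinv
    have hsr : spectralRadius ℂ ((↑u⁻¹ : A)) = ‖(↑u⁻¹ : A)‖₊ :=
      IsStarNormal.spectralRadius_eq_nnnorm ((↑u⁻¹ : A))
    have hle : spectralRadius ℂ ((↑u⁻¹ : A)) ≤ ENNReal.ofReal ε⁻¹ := by
      refine iSup₂_le fun ν hν => ?_
      rw [← ENNReal.ofReal_coe_nnreal, coe_nnnorm]
      exact ENNReal.ofReal_le_ofReal (hspec_inv ν hν)
    rw [hsr, ← ENNReal.ofReal_coe_nnreal, coe_nnnorm,
      ENNReal.ofReal_le_ofReal_iff (by positivity)] at hle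
    exact hle
  -- conclude λ•1 - N is a unit: contradiction
  have hpos : 0 < ‖(↑u⁻¹ : A)‖ := by
    rw [norm_pos_iff]
    exact Units.ne_zero _
  have hεle : ε ≤ ‖(↑u⁻¹ : A)‖⁻¹ := by
    calc ε = (ε⁻¹)⁻¹ := (inv_inv ε).symm
      _ ≤ ‖(↑u⁻¹ : A)‖⁻¹ := inv_anti₀ hpos hnorm_inv
  have hclose : ‖(algebraMap ℂ A lam - N) - (u : A)‖ < ‖(↑u⁻¹ : A)‖⁻¹ := by
    rw [hu]
    have : (algebraMap ℂ A lam - N) - (algebraMap ℂ A lam - Ns n) = Ns n - N := by abel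
    rw [this]
    exact lt_of_lt_of_le hnear hεle
  exact spectrum.mem_iff.mp hlam (u.ofNearby _ hclose).isUnit
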